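/- In the discrete static Schrödinger bridge: let R₀₁ be an n×m matrix with strictly positive entries, ρ₀ ∈ ℝⁿ and ρ₁ ∈ ℝᵐ strictly positive vectors with Σᵢρ₀ᵢ = Σⱼρ₁ⱼ = 1. If there exist strictly positive vectors f ∈ ℝⁿ, g ∈ ℝᵐ such that the matrix πᵢⱼ = fᵢ·R₀₁(i,j)·gⱼ has row sums ρ₀ and column sums ρ₁, then π is the unique minimizer of H(π | R₀₁) = Σᵢⱼ πᵢⱼ log(πᵢⱼ/R₀₁(i,j)) over the set of nonnegative matrices with row sums ρ₀ and column sums ρ₁. -/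
import Mathlib


open Finset

lemma sbp_pt_ineq (a b : ℝ) (ha : 0 ≤ a) (hb : 0 < b) :
    a - b ≤ a * Real.log (a / b) := by
  rcases eq_or_lt_of_le ha with h | h
  · simp [← h]; linarith
  · have h1 : Real.log (b / a) ≤ b / a - 1 := Real.log_le_sub_one_of_pos (by positivity)
    have h2 : Real.log (b / a) = - Real.log (a / b) := by
      rw [← Real.log_inv]; congr 1; field_simp
    have h3 : 1 - b / a ≤ Real.log (a / b) := by linarith
    have := mul_le_mul_of_nonneg_left h3 (le_of_lt h)
    have hba : a * (b / a) = b := by field_simp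
    nlinarith

lemma sbp_pt_eq (a b : ℝ) (ha : 0 ≤ a) (hb : 0 < b)
    (he : a - b = a * Real.log (a / b)) : a = b := by
  rcases eq_or_lt_of_le ha with h | h
  · exfalso; rw [← h] at he; simp at he; linarith
  · by_contra hne
    have hba : b / a ≠ 1 := by
      intro hc; apply hne; field_simp at hc; linarith
    have h1 : Real.log (b / a) < b / a - 1 := Real.log_lt_sub_one_of_pos (by positivity) hba
    have h2 : Real.log (b / a) = - Real.log (a / b) := by
      rw [← Real.log_inv]; congr 1; field_simp
    have h3 : 1 - b / a < Real.log (a / b) := by linarith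
    have := mul_lt_mul_of_pos_left h3 h
    have hba' : a * (b / a) = b := by field_simp
    nlinarith

lemma sbp_gibbs {ι : Type*} [Fintype ι] (a b : ι → ℝ) (ha : ∀ i, 0 ≤ a i)
    (hb : ∀ i, 0 < b i) (hs : ∑ i, a i = ∑ i, b i) :
    0 ≤ ∑ i, a i * Real.log (a i / b i) ∧
      (∑ i, a i * Real.log (a i / b i) = 0 → ∀ i, a i = b i) := by
  have hle : ∀ i ∈ Finset.univ (α := ι), a i - b i ≤ a i * Real.log (a i / b i) :=
    fun i _ => sbp_pt_ineq (a i) (b i) (ha i) (hb i)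
  have hsum0 : ∑ i, (a i - b i) = 0 := by rw [Finset.sum_sub_distrib, hs, sub_self]
  constructor
  · calc (0:ℝ) = ∑ i, (a i - b i) := hsum0.symm
    _ ≤ _ := Finset.sum_le_sum hle
  · intro h0
    have := (Finset.sum_eq_sum_iff_of_le hle).mp (by rw [h0, hsum0])
    intro i
    exact sbp_pt_eq (a i) (b i) (ha i) (hb i) (this i (Finset.mem_univ i))

/-- Discrete relative entropy `H(π | R) = Σᵢⱼ πᵢⱼ log(πᵢⱼ/Rᵢⱼ)`
(in Lean, `0 * log 0 = 0` automatically). -/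
noncomputable def discreteRelEnt {n m : ℕ}
    (π R : Matrix (Fin n) (Fin m) ℝ) : ℝ :=
  ∑ i, ∑ j, π i j * Real.log (π i j / R i j)

/-- discrete static Schrödinger bridge. If
`πᵢⱼ = fᵢ·R₀₁(i,j)·gⱼ` (with `f, g` strictly positive) has row sums `ρ₀` and
column sums `ρ₁`, then `π` is the unique minimizer of `H(· | R₀₁)` over the
transportation polytope of nonnegative matrices with these marginals. -/
theorem discrete_static_schroedinger_bridge
    {n m : ℕ} (R₀₁ : Matrix (Fin n) (Fin m) ℝ)
    (hR : ∀ i j, 0 < R₀₁ i j)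
    (ρ₀ : Fin n → ℝ) (ρ₁ : Fin m → ℝ)
    (hρ₀ : ∀ i, 0 < ρ₀ i) (hρ₁ : ∀ j, 0 < ρ₁ j)
    (hρ₀sum : ∑ i, ρ₀ i = 1) (hρ₁sum : ∑ j, ρ₁ j = 1)
    (f : Fin n → ℝ) (g : Fin m → ℝ)
    (hf : ∀ i, 0 < f i) (hg : ∀ j, 0 < g j)
    (π : Matrix (Fin n) (Fin m) ℝ)
    (hπ : ∀ i j, π i j = f i * R₀₁ i j * g j)
    (hrow : ∀ i, ∑ j, π i j = ρ₀ i)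
    (hcol : ∀ j, ∑ i, π i j = ρ₁ j) :
    (∀ π' : Matrix (Fin n) (Fin m) ℝ,
        (∀ i j, 0 ≤ π' i j) →
        (∀ i, ∑ j, π' i j = ρ₀ i) → (∀ j, ∑ i, π' i j = ρ₁ j) →
        discreteRelEnt π R₀₁ ≤ discreteRelEnt π' R₀₁) ∧
    (∀ π' : Matrix (Fin n) (Fin m) ℝ,
        (∀ i j, 0 ≤ π' i j) →
        (∀ i, ∑ j, π' i j = ρ₀ i) → (∀ j, ∑ i, π' i j = ρ₁ j) →
        discreteRelEnt π' R₀₁ = discreteRelEnt π R₀₁ → π' = π) := by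
  have hπpos : ∀ i j, 0 < π i j := fun i j => by
    rw [hπ]; exact mul_pos (mul_pos (hf i) (hR i j)) (hg j)
  set C : ℝ := (∑ i, ρ₀ i * Real.log (f i)) + ∑ j, ρ₁ j * Real.log (g j) with hC
  -- pointwise decomposition
  have hpt : ∀ (i : Fin n) (j : Fin m) (a : ℝ), 0 ≤ a →
      a * Real.log (a / R₀₁ i j)
        = a * Real.log (a / π i j) + (a * Real.log (f i) + a * Real.log (g j)) := by
    intro i j a ha
    rcases eq_or_lt_of_le ha with h | h
    · simp [← h]
    · have hπ' := hπ i j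
      have hlπ : Real.log (π i j) =
          Real.log (f i) + Real.log (R₀₁ i j) + Real.log (g j) := by
        rw [hπ', Real.log_mul (mul_pos (hf i) (hR i j)).ne' (hg j).ne',
          Real.log_mul (hf i).ne' (hR i j).ne']
      rw [Real.log_div h.ne' (hR i j).ne', Real.log_div h.ne' (hπpos i j).ne', hlπ]
      ring
  -- decomposition of the objective for any feasible π'
  have hdec : ∀ π' : Matrix (Fin n) (Fin m) ℝ,
      (∀ i j, 0 ≤ π' i j) →
      (∀ i, ∑ j, π' i j = ρ₀ i) → (∀ j, ∑ i, π' i j = ρ₁ j) →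
      discreteRelEnt π' R₀₁
        = (∑ i, ∑ j, π' i j * Real.log (π' i j / π i j)) + C := by
    intro π' hpos hrow' hcol'
    have : discreteRelEnt π' R₀₁
        = ∑ i, ∑ j, (π' i j * Real.log (π' i j / π i j)
            + (π' i j * Real.log (f i) + π' i j * Real.log (g j))) := by
      unfold discreteRelEnt
      exact Finset.sum_congr rfl fun i _ => Finset.sum_congr rfl fun j _ =>
        hpt i j (π' i j) (hpos i j)
    rw [this]
    simp only [Finset.sum_add_distrib]
    congr 1
    rw [hC]
    congr 1
    · refine Finset.sum_congr rfl fun i _ => ?_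
      rw [← Finset.sum_mul, hrow' i]
    · rw [Finset.sum_comm]
      refine Finset.sum_congr rfl fun j _ => ?_
      rw [← Finset.sum_mul, hcol' j]
  have hπself : discreteRelEnt π R₀₁ = C := by
    rw [hdec π (fun i j => (hπpos i j).le) hrow hcol]
    simp [div_self (hπpos _ _).ne']
  -- Gibbs inequality payload
  have hgibbs : ∀ π' : Matrix (Fin n) (Fin m) ℝ,
      (∀ i j, 0 ≤ π' i j) →
      (∀ i, ∑ j, π' i j = ρ₀ i) → (∀ j, ∑ i, π' i j = ρ₁ j) →
      0 ≤ ∑ i, ∑ j, π' i j * Real.log (π' i j / π i j) ∧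
        ((∑ i, ∑ j, π' i j * Real.log (π' i j / π i j)) = 0 → π' = π) := by
    intro π' hpos hrow' hcol'
    have hsum : ∑ p : Fin n × Fin m, π' p.1 p.2 = ∑ p : Fin n × Fin m, π p.1 p.2 := by
      rw [Fintype.sum_prod_type, Fintype.sum_prod_type]
      simp only [hrow' , hrow]
    have hg := sbp_gibbs (fun p : Fin n × Fin m => π' p.1 p.2)
      (fun p => π p.1 p.2) (fun p => hpos p.1 p.2) (fun p => hπpos p.1 p.2) hsum
    rw [Fintype.sum_prod_type] at hg
    refine ⟨hg.1, fun h0 => ?_⟩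
    funext i j
    exact hg.2 h0 (i, j)
  constructor
  · intro π' hpos hrow' hcol'
    rw [hπself, hdec π' hpos hrow' hcol']
    linarith [(hgibbs π' hpos hrow' hcol').1]
  · intro π' hpos hrow' hcol' heq
    rw [hπself, hdec π' hpos hrow' hcol'] at heq
    exact (hgibbs π' hpos hrow' hcol').2 (by linarith)
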